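/- Let R be a commutative ring and t, p0, p1, p2, p3, p4 ∈ R. The determinant of the 4×4 matrix over R with rows (t−p0, 0, p1, p3), (0, t−p0, −p4, p2), (p2, −p3, t+p0, 0), (p4, p1, 0, t+p0) equals (t^2 − p0^2 − p1*p2 − p3*p4)^2. -/

import Mathlib

/-- Determinantal representation: for elements `t, p0, …, p4` of a commutative ring `R`,
the determinant of the 4×4 matrix with rows `(t-p0, 0, p1, p3)`, `(0, t-p0, -p4, p2)`,
`(p2, -p3, t+p0, 0)`, `(p4, p1, 0, t+p0)` equals `(t^2 - p0^2 - p1*p2 - p3*p4)^2`. -/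
theorem det_eq_sq {R : Type*} [CommRing R] (t p0 p1 p2 p3 p4 : R) :
    (!![t - p0, 0, p1, p3;
        0, t - p0, -p4, p2;
        p2, -p3, t + p0, 0;
        p4, p1, 0, t + p0] : Matrix (Fin 4) (Fin 4) R).det =
      (t ^ 2 - p0 ^ 2 - p1 * p2 - p3 * p4) ^ 2 := by
  simp [Matrix.det_succ_row_zero, Fin.sum_univ_succ, Fin.succAbove, Fin.castSucc, Fin.castAdd, Fin.castLE]
  ring
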